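/- In any metatangible pair (A, A₀) one has T + A₀ = A; that is, every element of A can be written as a + b with a ∈ T ∪ {0} and b ∈ A₀, or lies in T ∪ A₀. -/

import Mathlib

/-- A general (non-distributive, non-associative) admissible `T`-pair:
an additive commutative monoid `A` with a multiplication and unit, a set of
tangible elements `T` forming a multiplicative monoid which acts distributively
on `A`, and a `T`-submodule `A0` of "null" elements with `A0 ∩ T ⊆ {0}`,
such that `T` additively spans `A`. -/
structure NdPair (A : Type*) [AddCommMonoid A] [Mul A] [One A] where
  T : Set A
  A0 : Set A
  one_mem : (1 : A) ∈ T
  T_mul : ∀ a b : A, a ∈ T → b ∈ T → a * b ∈ T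
  one_mul' : ∀ b : A, 1 * b = b
  mul_one' : ∀ b : A, b * 1 = b
  zero_mul' : ∀ b : A, (0 : A) * b = 0
  mul_zero' : ∀ b : A, b * (0 : A) = 0
  left_distrib' : ∀ a b c : A, a ∈ T → a * (b + c) = a * b + a * c
  right_distrib' : ∀ a b c : A, a ∈ T → (b + c) * a = b * a + c * a
  assoc_left : ∀ a₁ a₂ b : A, a₁ ∈ T → a₂ ∈ T → a₁ * (a₂ * b) = (a₁ * a₂) * b
  assoc_right : ∀ a₁ a₂ b : A, a₁ ∈ T → a₂ ∈ T → (b * a₁) * a₂ = b * (a₁ * a₂)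
  assoc_mid : ∀ a₁ a₂ b : A, a₁ ∈ T → a₂ ∈ T → (a₁ * b) * a₂ = a₁ * (b * a₂)
  zero_mem_A0 : (0 : A) ∈ A0
  A0_add : ∀ x y : A, x ∈ A0 → y ∈ A0 → x + y ∈ A0
  A0_mul_left : ∀ a x : A, a ∈ T → x ∈ A0 → a * x ∈ A0
  A0_mul_right : ∀ a x : A, a ∈ T → x ∈ A0 → x * a ∈ A0
  A0_inter_T : ∀ x : A, x ∈ A0 → x ∈ T → x = 0
  spanned : ∀ b : A, ∃ l : List A, (∀ x ∈ l, x ∈ T) ∧ l.sum = b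

/-- A pair satisfying Property N: there is a distinguished tangible element
`dag = 𝟙†` with `e = 𝟙 + 𝟙† ∈ A₀`, such that any sum of two tangibles landing
in `A₀` equals `a ∘ = a·e = a·(𝟙 + 𝟙†)`. -/
structure PropNPair (A : Type*) [AddCommMonoid A] [Mul A] [One A] extends NdPair A where
  dag : A
  dag_mem : dag ∈ T
  e_mem : (1 : A) + dag ∈ A0
  propN : ∀ a b : A, a ∈ T → b ∈ T → a + b ∈ A0 → a + b = a * (1 + dag)

/-- A metatangible pair: a pair with Property N in which the sum of any two
tangible elements lies in `T ∪ A₀`. -/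
structure MetaPair (A : Type*) [AddCommMonoid A] [Mul A] [One A] extends PropNPair A where
  metatangible : ∀ a b : A, a ∈ T → b ∈ T → a + b ∈ T ∨ a + b ∈ A0

/-- In any metatangible pair, `T + A₀ = A`: every element of `A` can be written
as `a + b` with `a ∈ T ∪ {0}` and `b ∈ A₀`. -/
theorem tangible_plus_null {A : Type*} [AddCommMonoid A] [Mul A] [One A]
    (P : MetaPair A) :
    ∀ c : A, ∃ a b : A, (a ∈ P.T ∨ a = 0) ∧ b ∈ P.A0 ∧ c = a + b := by
  have key : ∀ l : List A, (∀ x ∈ l, x ∈ P.T) →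
      ∃ a b : A, (a ∈ P.T ∨ a = 0) ∧ b ∈ P.A0 ∧ l.sum = a + b := by
    intro l
    induction l with
    | nil =>
      intro _
      exact ⟨0, 0, Or.inr rfl, P.zero_mem_A0, by simp⟩
    | cons x l ih =>
      intro hx
      obtain ⟨a, b, ha, hb, hsum⟩ := ih (fun y hy => hx y (List.mem_cons_of_mem _ hy))
      have hxT : x ∈ P.T := hx x List.mem_cons_self
      rcases ha with haT | ha0
      · rcases P.metatangible x a hxT haT with h | h
        · exact ⟨x + a, b, Or.inl h, hb, by rw [List.sum_cons, hsum, add_assoc]⟩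
        · exact ⟨0, (x + a) + b, Or.inr rfl, P.A0_add _ _ h hb,
            by rw [List.sum_cons, hsum, add_assoc, zero_add]⟩
      · exact ⟨x, b, Or.inl hxT, hb, by rw [List.sum_cons, hsum, ha0, zero_add]⟩
  intro c
  obtain ⟨l, hl, hsum⟩ := P.spanned c
  obtain ⟨a, b, ha, hb, h⟩ := key l hl
  exact ⟨a, b, ha, hb, hsum ▸ h⟩
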